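/- For every i ∈ [k]: (i) for each r ∈ [N] the vertical canonical path Canonical(r; a_i⇝b_i) is a shortest a_i⇝b_i path in D_int, with exactly kN + 2 vertices; and (ii) every shortest directed path from a_i to b_i in D_int equals Canonical(ℓ; a_i⇝b_i) for some ℓ ∈ [N]. -/

import Mathlib

/-- A directed path (self-avoiding walk) from `s` to `t` in the digraph with
edge relation `E`, given as the list of its vertices in order. -/
structure IsPathList {V : Type*} (E : V → V → Prop) (s t : V) (p : List V) : Prop where
  chain : p.Chain' E
  nodup : p.Nodup
  head : p.head? = some s
  last : p.getLast? = some t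

/-- A shortest directed `s⇝t` path, where the length of a path is its number of vertices. -/
def IsShortestDirPath {V : Type*} (E : V → V → Prop) (s t : V) (p : List V) : Prop :=
  IsPathList E s t p ∧ ∀ q : List V, IsPathList E s t q → p.length ≤ q.length

/-- Symmetrization of a relation: the adjacency of the undirected graph obtained by
forgetting the orientation of the edges. -/
def UAdj {V : Type*} (E : V → V → Prop) (x y : V) : Prop := E x y ∨ E y x

/-- The cost of a path: the sum of the costs of its vertices. -/
def pathCost {V : Type*} (cost : V → ℕ) (p : List V) : ℕ := (p.map cost).sum

/-- A shortest (minimum-cost) `s`–`t` path in the undirected graph obtained from `E`. -/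
def IsShortestCostPath {V : Type*} (E : V → V → Prop) (cost : V → ℕ) (s t : V)
    (p : List V) : Prop :=
  IsPathList (UAdj E) s t p ∧
    ∀ q : List V, IsPathList (UAdj E) s t q → pathCost cost p ≤ pathCost cost q

/-- The (directed) edges traversed by a path, as ordered pairs of consecutive vertices. -/
def dirEdges {V : Type*} (p : List V) : List (V × V) := p.zip p.tail

/-- Two directed paths are edge-disjoint. -/
def EdgeDisj {V : Type*} (p q : List V) : Prop := ∀ e ∈ dirEdges p, e ∉ dirEdges q

/-- The (undirected) edges traversed by a path, as unordered pairs. -/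
def uEdges {V : Type*} (p : List V) : List (Sym2 V) := (dirEdges p).map fun e => s(e.1, e.2)

/-- Two undirected paths are edge-disjoint. -/
def UEdgeDisj {V : Type*} (p q : List V) : Prop := ∀ e ∈ uEdges p, e ∉ uEdges q

/-- Two paths are vertex-disjoint. -/
def VertDisj {V : Type*} (p q : List V) : Prop := ∀ v ∈ p, v ∉ q

/-- The vertices of the intermediate graph `D_int` (also the vertex set of `U_int`):
grid vertices `w_{i,j}^{q,ℓ}` (`grid i j q ℓ`, with `q` the column and `ℓ` the row,
indices `0`-based) and terminal vertices `a i`, `b i`, `c j`, `d j`. -/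
inductive DIntV (k N : ℕ) where
  | grid (i j : Fin k) (q ℓ : Fin N)
  | a (i : Fin k)
  | b (i : Fin k)
  | c (j : Fin k)
  | d (j : Fin k)
  deriving DecidableEq, Fintype

/-- The directed edges of `D_int`. -/
inductive DIntE (k N : ℕ) : DIntV k N → DIntV k N → Prop where
  /-- `w_{i,j}^{q,ℓ} → w_{i,j}^{q,ℓ+1}` for `ℓ < N` -/
  | up (i j : Fin k) (q ℓ ℓ' : Fin N) (h : (ℓ' : ℕ) = (ℓ : ℕ) + 1) :
      DIntE k N (.grid i j q ℓ) (.grid i j q ℓ')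
  /-- `w_{i,j}^{q,ℓ} → w_{i,j}^{q+1,ℓ}` for `q < N` -/
  | right (i j : Fin k) (q q' ℓ : Fin N) (h : (q' : ℕ) = (q : ℕ) + 1) :
      DIntE k N (.grid i j q ℓ) (.grid i j q' ℓ)
  /-- `w_{i,j}^{N,ℓ} → w_{i+1,j}^{1,ℓ}` for `i < k` -/
  | hmatch (i i' j : Fin k) (q q' ℓ : Fin N)
      (hi : (i' : ℕ) = (i : ℕ) + 1) (hq : (q : ℕ) + 1 = N) (hq' : (q' : ℕ) = 0) :
      DIntE k N (.grid i j q ℓ) (.grid i' j q' ℓ)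
  /-- `w_{i,j}^{ℓ,N} → w_{i,j+1}^{ℓ,1}` for `j < k` -/
  | vmatch (i j j' : Fin k) (q ℓ ℓ' : Fin N)
      (hj : (j' : ℕ) = (j : ℕ) + 1) (hl : (ℓ : ℕ) + 1 = N) (hl' : (ℓ' : ℕ) = 0) :
      DIntE k N (.grid i j q ℓ) (.grid i j' q ℓ')
  /-- `a_i → w_{i,1}^{q,1}` for all `q ∈ [N]` -/
  | srcA (i j : Fin k) (q ℓ : Fin N) (hj : (j : ℕ) = 0) (hl : (ℓ : ℕ) = 0) :
      DIntE k N (.a i) (.grid i j q ℓ)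
  /-- `w_{i,k}^{q,N} → b_i` for all `q ∈ [N]` -/
  | snkB (i j : Fin k) (q ℓ : Fin N) (hj : (j : ℕ) + 1 = k) (hl : (ℓ : ℕ) + 1 = N) :
      DIntE k N (.grid i j q ℓ) (.b i)
  /-- `c_j → w_{1,j}^{1,ℓ}` for all `ℓ ∈ [N]` -/
  | srcC (i j : Fin k) (q ℓ : Fin N) (hi : (i : ℕ) = 0) (hq : (q : ℕ) = 0) :
      DIntE k N (.c j) (.grid i j q ℓ)
  /-- `w_{k,j}^{N,ℓ} → d_j` for all `ℓ ∈ [N]` -/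
  | snkD (i j : Fin k) (q ℓ : Fin N) (hi : (i : ℕ) + 1 = k) (hq : (q : ℕ) + 1 = N) :
      DIntE k N (.grid i j q ℓ) (.d j)

/-- The horizontal canonical path `Canonical(r; c_j ⇝ d_j)`, as the list of its
vertices : `c_j`, then row `r` of the grids `D_{1,j}, …, D_{k,j}` from left to right,
then `d_j`. -/
def canonH (k N : ℕ) (j : Fin k) (r : Fin N) : List (DIntV k N) :=
  DIntV.c j ::
    (((List.finRange k).flatMap fun i =>
        (List.finRange N).map fun q => DIntV.grid i j q r) ++ [DIntV.d j])

/-- The vertical canonical path `Canonical(r; a_i ⇝ b_i)`, as the list of its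
vertices : `a_i`, then column `r` of the grids `D_{i,1}, …, D_{i,k}` from bottom to top,
then `b_i`. -/
def canonV (k N : ℕ) (i : Fin k) (r : Fin N) : List (DIntV k N) :=
  DIntV.a i ::
    (((List.finRange k).flatMap fun j =>
        (List.finRange N).map fun ℓ => DIntV.grid i j r ℓ) ++ [DIntV.b i])
namespace DIntAux

variable {k N : ℕ}

/-- Potential function on `DIntV`. -/
def phi (k N : ℕ) : DIntV k N → ℕ
  | .grid _ j _ l => (j : ℕ) * N + (l : ℕ) + 1
  | .a _ => 0
  | .b _ => k * N + 1
  | .c _ => 0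
  | .d _ => k * N + 1

lemma edge_ne_c {x y : DIntV k N} (h : DIntE k N x y) (j : Fin k) : y ≠ DIntV.c j := by
  cases h <;> simp

lemma edge_ne_d {x y : DIntV k N} (h : DIntE k N x y) (j : Fin k) : x ≠ DIntV.d j := by
  cases h <;> simp

lemma phi_step {x y : DIntV k N} (h : DIntE k N x y)
    (hx : ∀ j, x ≠ DIntV.c j) (hy : ∀ j, y ≠ DIntV.d j) :
    phi k N y ≤ phi k N x + 1 := by
  cases h with
  | up i j q l l' hl => simp only [phi]; omega
  | right => simp [phi]
  | hmatch => simp [phi]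
  | vmatch i j j' q l l' hj hl hl' =>
      simp only [phi, hj, hl', add_mul, one_mul]; omega
  | srcA i j q l hj hl => simp [phi, hj, hl]
  | snkB i j q l hj hl =>
      simp only [phi, ← hj, add_mul, one_mul]; omega
  | srcC => exact absurd rfl (hx _)
  | snkD => exact absurd rfl (hy _)

end DIntAux
namespace DIntAux
variable {k N : ℕ}

lemma chain_get {p : List (DIntV k N)} (hc : p.Chain' (DIntE k N))
    {t : ℕ} (h : t + 1 < p.length) :
    DIntE k N (p[t]'(by omega)) (p[t+1]'h) := by
  have := List.isChain_iff_getElem.mp hc t (by omega)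
  simpa using this

lemma path_head {i : Fin k} {p : List (DIntV k N)}
    (hp : IsPathList (DIntE k N) (DIntV.a i) (DIntV.b i) p) (h : 0 < p.length) :
    p[0] = DIntV.a i := by
  have := hp.head
  rw [List.head?_eq_getElem?, List.getElem?_eq_getElem h] at this
  exact Option.some_injective _ this

lemma path_last {i : Fin k} {p : List (DIntV k N)}
    (hp : IsPathList (DIntE k N) (DIntV.a i) (DIntV.b i) p) (h : p.length - 1 < p.length) :
    p[p.length - 1] = DIntV.b i := by
  have := hp.last
  rw [List.getLast?_eq_getElem?, List.getElem?_eq_getElem h] at this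
  exact Option.some_injective _ this

lemma path_pos {i : Fin k} {p : List (DIntV k N)}
    (hp : IsPathList (DIntE k N) (DIntV.a i) (DIntV.b i) p) : 0 < p.length := by
  cases p with
  | nil => simpa using hp.head
  | cons x l => simp

lemma path_ne_c {i : Fin k} {p : List (DIntV k N)}
    (hp : IsPathList (DIntE k N) (DIntV.a i) (DIntV.b i) p)
    {t : ℕ} (h : t < p.length) : ∀ j, p[t] ≠ DIntV.c j := by
  cases t with
  | zero => rw [path_head hp (by omega)]; simp
  | succ s => exact fun j => edge_ne_c (chain_get hp.chain h) j

lemma path_ne_d {i : Fin k} {p : List (DIntV k N)}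
    (hp : IsPathList (DIntE k N) (DIntV.a i) (DIntV.b i) p)
    {t : ℕ} (h : t < p.length) : ∀ j, p[t] ≠ DIntV.d j := by
  rcases eq_or_ne t (p.length - 1) with rfl | hne
  · rw [path_last hp h]; simp
  · have h1 : t + 1 < p.length := by omega
    exact fun j => edge_ne_d (chain_get hp.chain h1) j

lemma path_phi_le {i : Fin k} {p : List (DIntV k N)}
    (hp : IsPathList (DIntE k N) (DIntV.a i) (DIntV.b i) p) :
    ∀ t (h : t < p.length), phi k N p[t] ≤ t := by
  intro t
  induction t with
  | zero => intro h; rw [path_head hp h]; simp [phi]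
  | succ s ih =>
    intro h
    have hs : s < p.length := by omega
    have := phi_step (chain_get hp.chain h)
      (path_ne_c hp hs) (path_ne_d hp h)
    have := ih hs
    omega

lemma length_lb {i : Fin k} {p : List (DIntV k N)}
    (hp : IsPathList (DIntE k N) (DIntV.a i) (DIntV.b i) p) :
    k * N + 2 ≤ p.length := by
  have hpos := path_pos hp
  have h1 : p.length - 1 < p.length := by omega
  have := path_phi_le hp (p.length - 1) h1
  rw [path_last hp h1] at this
  simp only [phi] at this
  omega

end DIntAux
namespace DIntAux
variable {k N : ℕ}

/-- Normalized grid-vertex constructor. -/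
def gr (hN : 0 < N) (hk : 0 < k) (i : Fin k) (r : Fin N) (x y : ℕ) : DIntV k N :=
  DIntV.grid i ⟨x % k, Nat.mod_lt _ hk⟩ r ⟨y % N, Nat.mod_lt _ hN⟩

/-- The `t`-th vertex of the canonical vertical path. -/
def fV (hN : 0 < N) (hk : 0 < k) (i : Fin k) (r : Fin N) (t : ℕ) : DIntV k N :=
  if t = 0 then DIntV.a i
  else if t ≤ k * N then gr hN hk i r ((t-1)/N) ((t-1) % N)
  else DIntV.b i

lemma flat_range {α : Type*} {N : ℕ} (hN : 0 < N) (G : ℕ → ℕ → α) :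
    ∀ m : ℕ, (List.range m).flatMap (fun j => (List.range N).map fun l => G j l)
      = (List.range (m*N)).map fun t => G (t/N) (t%N) := by
  intro m
  induction m with
  | zero => simp
  | succ m ih =>
    rw [List.range_succ, List.flatMap_append, ih, Nat.succ_mul, List.range_add,
      List.map_append, List.map_map]
    simp only [List.flatMap_cons, List.flatMap_nil, List.append_nil]
    congr 1
    apply List.map_congr_left
    intro lx hlx
    have hlt : lx < N := List.mem_range.mp hlx
    have h1 : (m * N + lx) / N = m := by
      rw [Nat.add_comm, Nat.add_mul_div_right _ _ hN, Nat.div_eq_of_lt hlt, Nat.zero_add]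
    have h2 : (m * N + lx) % N = lx := by
      rw [Nat.add_comm, Nat.add_mul_mod_self_right, Nat.mod_eq_of_lt hlt]
    simp [Function.comp, h1, h2]

lemma canonV_flat (hN : 0 < N) (hk : 0 < k) (i : Fin k) (r : Fin N) :
    (List.finRange k).flatMap
        (fun j => (List.finRange N).map fun ℓ => DIntV.grid i j r ℓ)
      = (List.range (k*N)).map fun t => gr hN hk i r (t/N) (t%N) := by
  rw [← flat_range hN _ k]
  have step1 : ∀ (l : List (Fin k)),
      l.flatMap (fun j => (List.finRange N).map fun ℓ => DIntV.grid i j r ℓ)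
      = l.flatMap (fun j => (List.range N).map fun y => gr hN hk i r j.val y) := by
    intro l
    induction l with
    | nil => simp
    | cons x xs ih =>
      simp only [List.flatMap_cons, ih]
      congr 1
      rw [← List.map_coe_finRange_eq_range (n := N), List.map_map]
      apply List.map_congr_left
      intro ℓ _
      simp only [Function.comp, gr, Nat.mod_eq_of_lt x.isLt, Nat.mod_eq_of_lt ℓ.isLt]
  rw [step1]
  rw [← List.map_coe_finRange_eq_range (n := k), List.flatMap_map]

lemma canonV_eq (hN : 0 < N) (hk : 0 < k) (i : Fin k) (r : Fin N) :
    canonV k N i r = List.map (fV hN hk i r) (List.range (k*N+2)) := by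
  have h2 : k*N+2 = 1 + (k*N + 1) := by omega
  rw [h2, List.range_add, List.map_append, List.map_map]
  rw [show List.range (k*N+1) = List.range (k*N) ++ [k*N] from List.range_succ,
    List.map_append]
  rw [canonV, canonV_flat hN hk i r]
  have e0 : List.map (fV hN hk i r) (List.range 1) = [DIntV.a i] := by
    rw [show List.range 1 = [0] from rfl]
    simp [fV]
  have e1 : List.map (fV hN hk i r ∘ fun x => 1+x) (List.range (k*N))
      = List.map (fun t => gr hN hk i r (t/N) (t%N)) (List.range (k*N)) := by
    apply List.map_congr_left
    intro t ht
    have := List.mem_range.mp ht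
    simp only [Function.comp, fV]
    rw [if_neg (by omega), if_pos (by omega), Nat.add_sub_cancel_left]
  have e2 : List.map (fV hN hk i r ∘ fun x => 1+x) [k*N] = [DIntV.b i] := by
    simp only [List.map_cons, List.map_nil, Function.comp, fV]
    rw [if_neg (by omega), if_neg (by omega)]
  rw [e0, e1, e2]
  simp

end DIntAux
namespace DIntAux
variable {k N : ℕ}

lemma divmod_succ_lt {N s : ℕ} (hN : 0 < N) (h : s % N + 1 < N) :
    (s+1)/N = s/N ∧ (s+1) % N = s % N + 1 := by
  have := Nat.div_add_mod s N
  exact (Nat.div_mod_unique hN).mpr ⟨by omega, h⟩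

lemma divmod_succ_eq {N s : ℕ} (hN : 0 < N) (h : s % N + 1 = N) :
    (s+1)/N = s/N + 1 ∧ (s+1) % N = 0 := by
  have := Nat.div_add_mod s N
  refine (Nat.div_mod_unique hN).mpr ⟨?_, hN⟩
  have : N * (s/N + 1) = N * (s/N) + N := by ring
  omega

lemma phi_fV (hN : 0 < N) (hk : 0 < k) (i : Fin k) (r : Fin N)
    {t : ℕ} (ht : t ≤ k*N + 1) : phi k N (fV hN hk i r t) = t := by
  rcases Nat.eq_zero_or_pos t with rfl | hpos
  · simp [fV, phi]
  rcases le_or_gt t (k*N) with hle | hgt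
  · have hd : (t-1)/N < k := (Nat.div_lt_iff_lt_mul hN).mpr (by omega)
    simp only [fV, if_neg (by omega : ¬ t = 0), if_pos hle, gr, phi]
    rw [Nat.mod_eq_of_lt hd, Nat.mod_eq_of_lt (Nat.mod_lt _ hN)]
    have := Nat.div_add_mod (t-1) N
    have h2 : (t-1)/N * N = N * ((t-1)/N) := by ring
    omega
  · have : t = k*N+1 := by omega
    subst this
    simp only [fV, if_neg (by omega : ¬ k*N+1 = 0), if_neg (by omega : ¬ k*N+1 ≤ k*N), phi]

lemma fV_edge (hN : 0 < N) (hk : 0 < k) (i : Fin k) (r : Fin N)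
    {t : ℕ} (ht : t < k*N + 1) :
    DIntE k N (fV hN hk i r t) (fV hN hk i r (t+1)) := by
  have hkN : k*N - 1 = (k-1)*N + (N-1) := by
    cases k with
    | zero => omega
    | succ k =>
      cases N with
      | zero => omega
      | succ N => simp only [Nat.add_sub_cancel]; rw [Nat.succ_mul]; omega
  rcases Nat.eq_zero_or_pos t with rfl | hpos
  · have h1 : (1:ℕ) ≤ k*N := Nat.mul_pos hk hN
    simp only [fV, if_pos rfl, if_neg (by omega : ¬ (1:ℕ) = 0), if_pos h1, gr]
    exact DIntE.srcA i _ r _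
      (by simp [Nat.div_eq_of_lt hN]) (by simp [Nat.mod_eq_of_lt hN])
  rcases eq_or_lt_of_le (Nat.succ_le_of_lt ht) with heq | hlt
  · -- t = k*N : grid → b
    have htt : t = k*N := by omega
    subst htt
    simp only [fV, if_neg (by omega : ¬ k*N = 0), if_pos (le_refl _),
      if_neg (by omega : ¬ k*N+1 = 0), if_neg (by omega : ¬ k*N + 1 ≤ k*N), gr]
    have e1 : (k*N-1)/N = k-1 := by
      rw [hkN, Nat.add_comm, Nat.add_mul_div_right _ _ hN, Nat.div_eq_of_lt (by omega)]
      omega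
    have e2 : (k*N-1) % N = N-1 := by
      rw [hkN, Nat.add_comm, Nat.add_mul_mod_self_right, Nat.mod_eq_of_lt (by omega)]
    apply DIntE.snkB
    · show (k*N-1)/N % k + 1 = k
      rw [e1, Nat.mod_eq_of_lt (by omega : k-1 < k)]; omega
    · show (k*N-1) % N % N + 1 = N
      rw [e2, Nat.mod_eq_of_lt (by omega : N-1 < N)]; omega
  · -- 1 ≤ t, t+1 ≤ k*N : grid → grid
    have h1 : t ≤ k*N := by omega
    have h2 : t + 1 ≤ k*N := by omega
    simp only [fV, if_neg (by omega : ¬ t = 0), if_pos h1,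
      if_neg (by omega : ¬ t+1 = 0), if_pos h2, Nat.add_sub_cancel, gr]
    set s := t - 1 with hs
    have hts : t = s + 1 := by omega
    rw [hts]
    have hsk : s + 1 < k*N := by omega
    have hdiv : s/N < k := (Nat.div_lt_iff_lt_mul hN).mpr (by omega)
    have hdiv1 : (s+1)/N < k := (Nat.div_lt_iff_lt_mul hN).mpr (by omega)
    rcases lt_or_ge (s % N + 1) N with hup | hvm
    · obtain ⟨hq, hm⟩ := divmod_succ_lt hN hup
      have ej : (⟨(s+1)/N % k, Nat.mod_lt _ hk⟩ : Fin k)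
          = ⟨s/N % k, Nat.mod_lt _ hk⟩ := by
        apply Fin.ext; simp [hq]
      rw [ej]
      exact DIntE.up i _ r _ _
        (by show (s+1) % N % N = s % N % N + 1
            rw [hm, Nat.mod_eq_of_lt hup, Nat.mod_eq_of_lt (Nat.mod_lt _ hN)])
    · have hvm' : s % N + 1 = N := by have := Nat.mod_lt s hN; omega
      obtain ⟨hq, hm⟩ := divmod_succ_eq hN hvm'
      exact DIntE.vmatch i _ _ r _ _
        (by show (s+1)/N % k = s/N % k + 1
            rw [hq, Nat.mod_eq_of_lt (by omega : s/N + 1 < k), Nat.mod_eq_of_lt hdiv])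
        (by show s % N % N + 1 = N
            rw [Nat.mod_eq_of_lt (Nat.mod_lt _ hN)]; exact hvm')
        (by show (s+1) % N % N = 0
            rw [hm]; exact Nat.zero_mod N)
end DIntAux
namespace DIntAux
variable {k N : ℕ}

lemma canonV_length (hN : 0 < N) (hk : 0 < k) (i : Fin k) (r : Fin N) :
    (canonV k N i r).length = k * N + 2 := by
  rw [canonV_eq hN hk i r, List.length_map, List.length_range]

lemma canonV_isPath (hN : 0 < N) (hk : 0 < k) (i : Fin k) (r : Fin N) :
    IsPathList (DIntE k N) (DIntV.a i) (DIntV.b i) (canonV k N i r) := by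
  rw [canonV_eq hN hk i r]
  constructor
  · show List.IsChain _ _
    rw [List.isChain_map, show k*N+2 = (k*N+1)+1 from rfl]
    rw [show (k*N+1)+1 = (k*N+1).succ from rfl, List.isChain_range_succ]
    intro m hm
    exact fV_edge hN hk i r hm
  · apply List.Nodup.map_on _ List.nodup_range
    intro x hx y hy hxy
    have hx' : x ≤ k*N+1 := by have := List.mem_range.mp hx; omega
    have hy' : y ≤ k*N+1 := by have := List.mem_range.mp hy; omega
    have := phi_fV hN hk i r hx'
    rw [hxy, phi_fV hN hk i r hy'] at this
    omega
  · rw [List.head?_eq_getElem?, List.getElem?_eq_getElem (by simp)]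
    rw [List.getElem_map, List.getElem_range]
    simp [fV]
  · rw [List.getLast?_eq_getElem?, List.length_map, List.length_range,
      List.getElem?_eq_getElem (by simp)]
    rw [List.getElem_map, List.getElem_range]
    simp only [fV, Nat.add_sub_cancel]
    rw [if_neg (by omega), if_neg (by omega)]

lemma canonV_shortest (hN : 0 < N) (hk : 0 < k) (i : Fin k) (r : Fin N) :
    IsShortestDirPath (DIntE k N) (DIntV.a i) (DIntV.b i) (canonV k N i r) := by
  refine ⟨canonV_isPath hN hk i r, fun q hq => ?_⟩
  rw [canonV_length hN hk i r]
  exact length_lb hq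

end DIntAux
namespace DIntAux
variable {k N : ℕ}

lemma shortest_unique (hN : 0 < N) (hk : 0 < k) (i : Fin k) {p : List (DIntV k N)}
    (hp : IsShortestDirPath (DIntE k N) (DIntV.a i) (DIntV.b i) p) :
    ∃ r : Fin N, p = canonV k N i r := by
  obtain ⟨hpl, hmin⟩ := hp
  have hlen : p.length = k*N+2 := le_antisymm
    (by simpa [canonV_length hN hk i ⟨0,hN⟩] using hmin _ (canonV_isPath hN hk i ⟨0,hN⟩))
    (length_lb hpl)
  have hexact : ∀ t (h : t < p.length), phi k N p[t] = t := by
    have lower : ∀ s t, t + s = k*N+1 → ∀ (h : t < p.length), t ≤ phi k N p[t] := by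
      intro s
      induction s with
      | zero =>
        intro t hts h
        have ht : t = p.length - 1 := by omega
        subst ht
        rw [path_last hpl (by omega)]
        simp only [phi]
        omega
      | succ s ih =>
        intro t hts h
        have h1 : t + 1 < p.length := by omega
        have hi1 := ih (t+1) (by omega) h1
        have hst := phi_step (chain_get hpl.chain h1)
          (path_ne_c hpl (by omega)) (path_ne_d hpl h1)
        omega
    intro t h
    exact le_antisymm (path_phi_le hpl t h) (lower (k*N+1 - t) t (by omega) h)
  have h01 : 1 < p.length := by omega
  have he0 : DIntE k N (p[0]'(by omega)) (p[1]'h01) := chain_get hpl.chain h01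
  rw [path_head hpl (by omega)] at he0
  obtain ⟨r, hp1⟩ : ∃ q : Fin N, p[1]'h01 = DIntV.grid i ⟨0, hk⟩ q ⟨0, hN⟩ := by
    generalize hy : p[1]'h01 = y at he0
    cases he0 with
    | srcA i j q l hj hl =>
      refine ⟨q, ?_⟩
      congr 1 <;> apply Fin.ext <;> simp [hj, hl]
    all_goals simp_all
  have claim : ∀ t, 1 ≤ t → t ≤ k*N → ∀ (h : t < p.length),
      p[t] = gr hN hk i r ((t-1)/N) ((t-1) % N) := by
    intro t
    induction t with
    | zero => omega
    | succ s ih =>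
      intro h1 h2 h
      rcases Nat.eq_zero_or_pos s with rfl | hs
      · rw [hp1]
        simp only [Nat.add_sub_cancel, gr]
        congr 1 <;> apply Fin.ext <;> simp [Nat.zero_div, Nat.zero_mod]
      · have hsl : s < p.length := by omega
        have ihs := ih hs (by omega) hsl
        have he : DIntE k N (p[s]'hsl) (p[s+1]'h) := chain_get hpl.chain h
        have hps : phi k N (p[s+1]'h) = s+1 := hexact (s+1) h
        have hpxs : phi k N (p[s]'hsl) = s := hexact s hsl
        have hnd : ∀ j, (p[s+1]'h) ≠ DIntV.d j := path_ne_d hpl h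
        rw [ihs] at he hpxs
        set u := s - 1 with hu
        have hsu : s = u + 1 := by omega
        have hudiv : u / N < k := (Nat.div_lt_iff_lt_mul hN).mpr (by omega)
        simp only [gr] at he hpxs ⊢
        rw [Nat.add_sub_cancel]
        generalize hy : p[s+1]'h = y at he hps hnd ⊢
        cases he with
        | up _ _ _ _ l' hl' =>
          have hlt : u % N + 1 < N := by
            have := l'.isLt
            rw [hl'] at this
            simp only [Nat.mod_eq_of_lt (Nat.mod_lt _ hN)] at this ⊢
            omega
          obtain ⟨hq, hm⟩ := divmod_succ_lt hN hlt
          rw [← hsu] at hq hm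
          congr 1 <;> apply Fin.ext
          · simp [hq]
          · simp only [hl', hm]
            simp [Nat.mod_eq_of_lt (Nat.mod_lt u hN),
              Nat.mod_eq_of_lt (by omega : u % N + 1 < N)]
        | right _ _ _ q' _ hq' =>
          exfalso
          simp only [phi] at hps hpxs
          omega
        | hmatch _ i' _ _ q' _ hi' hq hq' =>
          exfalso
          simp only [phi] at hps hpxs
          omega
        | vmatch _ _ j' _ _ l' hj hl hl' =>
          have hvm : u % N + 1 = N := by
            simp only [Nat.mod_eq_of_lt (Nat.mod_lt _ hN)] at hl
            exact hl
          obtain ⟨hq, hm⟩ := divmod_succ_eq hN hvm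
          rw [← hsu] at hq hm
          have hjv : (j' : ℕ) = u / N % k + 1 := hj
          rw [Nat.mod_eq_of_lt hudiv] at hjv
          have hjlt : u / N + 1 < k := by
            have := j'.isLt
            omega
          congr 1 <;> apply Fin.ext
          · show (j' : ℕ) = s / N % k
            rw [hjv, hq, Nat.mod_eq_of_lt hjlt]
          · show (l' : ℕ) = s % N % N
            rw [hl', hm]; simp
        | snkB _ _ _ _ hj hl =>
          exfalso
          simp only [phi] at hps
          omega
        | snkD _ _ _ _ hi hq =>
          exact absurd rfl (hnd _)
  refine ⟨r, ?_⟩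
  rw [canonV_eq hN hk i r]
  apply List.ext_getElem (by rw [hlen]; simp)
  intro n h1 h2
  rw [List.getElem_map, List.getElem_range]
  rcases Nat.eq_zero_or_pos n with rfl | hn
  · rw [path_head hpl (by omega)]; simp [fV]
  rcases le_or_gt n (k*N) with hle | hgt
  · rw [claim n hn hle h1]
    simp only [fV, if_neg (by omega : ¬ n = 0), if_pos hle]
  · have hn2 : n = k*N+1 := by omega
    have hn3 : n = p.length - 1 := by omega
    subst hn3
    rw [path_last hpl (by omega)]
    simp only [fV]
    rw [if_neg (by omega), if_neg (by omega)]

end DIntAux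
/-- for every `i ∈ [k]`: (i) for each `r ∈ [N]` the vertical canonical path
`Canonical(r; a_i⇝b_i)` is a shortest `a_i⇝b_i` path in `D_int`, with exactly `kN + 2`
vertices; and (ii) every shortest directed `a_i⇝b_i` path in `D_int` equals
`Canonical(ℓ; a_i⇝b_i)` for some `ℓ ∈ [N]`. -/
theorem DInt_canonV_shortest (N k : ℕ) (hN : 1 ≤ N) (hk : 1 ≤ k) (i : Fin k) :
    (∀ r : Fin N,
      IsShortestDirPath (DIntE k N) (DIntV.a i) (DIntV.b i) (canonV k N i r) ∧
      (canonV k N i r).length = k * N + 2) ∧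
    (∀ p : List (DIntV k N),
      IsShortestDirPath (DIntE k N) (DIntV.a i) (DIntV.b i) p →
      ∃ ℓ : Fin N, p = canonV k N i ℓ) := by
  
  refine ⟨fun r => ⟨DIntAux.canonV_shortest hN hk i r, DIntAux.canonV_length hN hk i r⟩,
    fun p hp => ?_⟩
  exact DIntAux.shortest_unique hN hk i hp
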